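/- The exterior product of parameters, defined componentwise by (η₁∧η₂)^{s,k} := η₁^{s,k} + η₂^{s,k} + Σ_{j=0}^{k} η₁^{s+j,k-j} ∧ η₂^{s,j}, is an associative semigroup law on the set P(U) of recalibration parameters, with neutral element 0. -/

import Mathlib

/-- Recalibration parameters.  A parameter `η = (η^{s,k})` with
`η^{s,k} ∈ M_{p_{s+k},p_s}(E^{0,k}(U))` is encoded by its (target, source) block
indices: `η t s` corresponds to `η^{s,k}` with `t = s + k`.  Here `Ω` is the algebra
of (0,•)-forms on `U` (matrix wedge = matrix product in `Ω`). -/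
def IsParam {Ω : Type*} [Ring Ω] (m : ℕ) (p : ℤ → ℕ)
    (η : ∀ t s : ℤ, Matrix (Fin (p t)) (Fin (p s)) Ω) : Prop :=
  (∀ t s : ℤ, ¬(0 ≤ s ∧ s ≤ t ∧ t ≤ (m : ℤ)) → η t s = 0) ∧
  ∀ s : ℤ, IsUnit ((1 : Matrix (Fin (p s)) (Fin (p s)) Ω) + η s s)

/-- Exterior product of parameters:
`(η₁∧η₂)^{s,k} = η₁^{s,k} + η₂^{s,k} + Σ_{j=0}^{k} η₁^{s+j,k-j} ∧ η₂^{s,j}`,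
in (target, source) indices `(η₁∧η₂) t s = η₁ t s + η₂ t s + Σ_{u=s}^{t} η₁ t u * η₂ u s`. -/
noncomputable def pwedge {Ω : Type*} [Ring Ω] (p : ℤ → ℕ)
    (η₁ η₂ : ∀ t s : ℤ, Matrix (Fin (p t)) (Fin (p s)) Ω) :
    ∀ t s : ℤ, Matrix (Fin (p t)) (Fin (p s)) Ω :=
  fun t s => η₁ t s + η₂ t s + ∑ u ∈ Finset.Icc s t, η₁ t u * η₂ u s

/-- The exterior product of parameters is an associative semigroup law on the
set `P(U)` of recalibration parameters (closure, associativity), with neutral element `0`. -/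
theorem stmt5 {Ω : Type*} [Ring Ω] (m : ℕ) (p : ℤ → ℕ)
    (η₁ η₂ η₃ : ∀ t s : ℤ, Matrix (Fin (p t)) (Fin (p s)) Ω)
    (h₁ : IsParam m p η₁) (h₂ : IsParam m p η₂) (h₃ : IsParam m p η₃) :
    IsParam m p (pwedge p η₁ η₂)
    ∧ pwedge p (pwedge p η₁ η₂) η₃ = pwedge p η₁ (pwedge p η₂ η₃)
    ∧ pwedge p η₁ (fun _ _ => 0) = η₁
    ∧ pwedge p (fun _ _ => 0) η₁ = η₁ := by
  obtain ⟨h₁0, h₁u⟩ := h₁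
  obtain ⟨h₂0, h₂u⟩ := h₂
  refine ⟨⟨?_, ?_⟩, ?_, ?_, ?_⟩
  · -- closure: support
    intro t s hts
    have hsum : ∀ u ∈ Finset.Icc s t, η₁ t u * η₂ u s = 0 := by
      intro u hu
      rw [Finset.mem_Icc] at hu
      by_cases hs : 0 ≤ s
      · by_cases hm : t ≤ (m : ℤ)
        · exfalso; exact hts ⟨hs, hu.1.trans hu.2, hm⟩
        · rw [h₁0 t u (fun h => hm h.2.2), Matrix.zero_mul]
      · rw [h₂0 u s (fun h => hs h.1), Matrix.mul_zero]
    by_cases hst : s ≤ t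
    · have ht : ¬(0 ≤ s ∧ s ≤ t ∧ t ≤ (m : ℤ)) := hts
      simp [pwedge, h₁0 t s hts, h₂0 t s hts, Finset.sum_eq_zero hsum]
    · simp [pwedge, h₁0 t s hts, h₂0 t s hts, Finset.Icc_eq_empty hst]
  · -- closure: units
    intro s
    have : (1 : Matrix (Fin (p s)) (Fin (p s)) Ω) + pwedge p η₁ η₂ s s
        = (1 + η₁ s s) * (1 + η₂ s s) := by
      simp only [pwedge, Finset.Icc_self, Finset.sum_singleton, Matrix.mul_add,
        Matrix.add_mul, Matrix.one_mul, Matrix.mul_one]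
      abel
    rw [this]
    exact (h₁u s).mul (h₂u s)
  · -- associativity
    funext t s
    simp only [pwedge, Finset.sum_add_distrib, Finset.mul_sum, Finset.sum_mul,
      Matrix.add_mul, Matrix.mul_add, Matrix.sum_mul, Matrix.mul_sum, mul_assoc]
    have key : ∑ u ∈ Finset.Icc s t, ∑ v ∈ Finset.Icc u t, η₁ t v * η₂ v u * η₃ u s
        = ∑ u ∈ Finset.Icc s t, ∑ v ∈ Finset.Icc s u, η₁ t u * (η₂ u v * η₃ v s) := by
      calc ∑ u ∈ Finset.Icc s t, ∑ v ∈ Finset.Icc u t, η₁ t v * η₂ v u * η₃ u s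
          = ∑ u ∈ Finset.Icc s t, ∑ v ∈ Finset.Icc s t,
              if u ≤ v then η₁ t v * η₂ v u * η₃ u s else 0 := by
            refine Finset.sum_congr rfl fun u hu => ?_
            rw [Finset.mem_Icc] at hu
            rw [← Finset.sum_filter]
            refine Finset.sum_congr ?_ (fun _ _ => rfl)
            ext v; simp only [Finset.mem_Icc, Finset.mem_filter]; omega
        _ = ∑ v ∈ Finset.Icc s t, ∑ u ∈ Finset.Icc s t,
              if u ≤ v then η₁ t v * η₂ v u * η₃ u s else 0 := Finset.sum_comm
        _ = ∑ v ∈ Finset.Icc s t, ∑ u ∈ Finset.Icc s v, η₁ t v * (η₂ v u * η₃ u s) := by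
            refine Finset.sum_congr rfl fun v hv => ?_
            rw [Finset.mem_Icc] at hv
            rw [← Finset.sum_filter]
            refine Finset.sum_congr ?_ (fun _ _ => Matrix.mul_assoc _ _ _)
            ext u; simp only [Finset.mem_Icc, Finset.mem_filter]; omega
    rw [key]
    abel
  · funext t s; simp [pwedge]
  · funext t s; simp [pwedge]
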